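/- If w[i..k] is a Lyndon word for some k, and j ≤ k is a position with i < j such that w[j..|w|] ≺ w[i..|w|], then a contradiction follows; equivalently, if w[i..k] is a Lyndon word then for all j with i < j ≤ k, w[i..|w|] ≺ w[j..|w|]. -/

import Mathlib

/-- A string (list) is a Lyndon word w.r.t. the lexicographic order:
it is strictly smaller than every nonempty proper suffix. -/
def IsLyndon {α : Type*} [LinearOrder α] (w : List α) : Prop :=
  w ≠ [] ∧ ∀ i, 0 < i → i < w.length → List.Lex (· < ·) w (w.drop i)

/-- `substr w i j` is the substring `w[i..j]` (1-indexed, inclusive). -/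
def substr {α : Type*} (w : List α) (i j : ℕ) : List α :=
  (w.drop (i - 1)).take (j - i + 1)

lemma lex_of_take {α : Type*} {r : α → α → Prop} :
    ∀ (x y : List α) (n m : ℕ), List.Lex r (x.take n) (y.take m) →
      (y.take m).length ≤ (x.take n).length → List.Lex r x y := by
  intro x
  induction x with
  | nil =>
    intro y n m h hlen
    simp only [List.take_nil, List.length_nil, Nat.le_zero, List.length_eq_zero_iff] at hlen
    rw [List.take_nil, hlen] at h
    cases h
  | cons a x' ih =>
    intro y n m h hlen
    cases n with
    | zero =>
      simp only [List.take_zero, List.length_nil, Nat.le_zero, List.length_eq_zero_iff] at hlen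
      rw [List.take_zero, hlen] at h
      cases h
    | succ n' =>
      cases y with
      | nil => rw [List.take_nil] at h; cases h
      | cons b y' =>
        cases m with
        | zero => rw [List.take_zero] at h; cases h
        | succ m' =>
          simp only [List.take_succ_cons] at h hlen
          cases h with
          | rel hr => exact List.Lex.rel hr
          | cons h' =>
            simp only [List.length_cons, Nat.add_le_add_iff_right] at hlen
            exact List.Lex.cons (ih y' n' m' h' hlen)

/-- If `w[i..k]` is a Lyndon word, then for all `j` with `i < j ≤ k`,
`w[i..|w|] ≺ w[j..|w|]`. -/
theorem stmt3 {α : Type*} [LinearOrder α] (w : List α) (i k : ℕ)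
    (hi : 1 ≤ i) (hik : i ≤ k) (hk : k ≤ w.length)
    (hLyn : IsLyndon (substr w i k)) :
    ∀ j, i < j → j ≤ k → List.Lex (· < ·) (w.drop (i - 1)) (w.drop (j - 1)) := by
  intro j hij hjk
  set A := w.drop (i - 1) with hA
  have hAlen : A.length = w.length - (i - 1) := List.length_drop
  have hulen : (substr w i k).length = k - i + 1 := by
    rw [substr, List.length_take, hAlen]; omega
  have hd1 : 0 < j - i := by omega
  have hd2 : j - i < (substr w i k).length := by omega
  have hlex := hLyn.2 (j - i) hd1 hd2
  have hdrop : (substr w i k).drop (j - i) = (w.drop (j - 1)).take (k - i + 1 - (j - i)) := by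
    rw [substr, List.drop_take, List.drop_drop]
    congr 2
    omega
  rw [hdrop, substr] at hlex
  apply lex_of_take A (w.drop (j - 1)) (k - i + 1) (k - i + 1 - (j - i)) hlex
  have : ((w.drop (j - 1)).take (k - i + 1 - (j - i))).length ≤ k - i + 1 - (j - i) := by
    rw [List.length_take]; omega
  have h2 : (A.take (k - i + 1)).length = k - i + 1 := by
    rw [List.length_take, hAlen]; omega
  omega
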